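/- arXiv:2311.12743 — 2 statements merged into one kernel-verified Lean document; each statement's English description precedes it below -/
import Mathlib

section
/- Suppose ∫_ℝ e^{rv} Π(dv) < ∞ for every r ∈ ℝ and that Π is not a Dirac point mass. Let φ ∈ D(T₁), set Ψ := ĉ·log T₁φ, and assume Ψ is bounded from below on the support of Π. Then Tφ is twice differentiable with (Tφ)''(y) = (1/ĉ)·[ ∫ v² e^{(yv−Ψ(v))/ĉ} Π(dv) / ∫ e^{(yv−Ψ(v))/ĉ} Π(dv) − ( ∫ v e^{(yv−Ψ(v))/ĉ} Π(dv) / ∫ e^{(yv−Ψ(v))/ĉ} Π(dv) )² ], and (Tφ)''(y) > 0 for every y ∈ ℝ, so that Tφ is strictly convex. -/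
open MeasureTheory Real Set Filter

noncomputable section

/-- Density of the centered normal distribution with variance `σ²`. -/
def pdens (σ y : ℝ) : ℝ :=
  (Real.sqrt (2 * Real.pi * σ ^ 2))⁻¹ * Real.exp (-(y ^ 2) / (2 * σ ^ 2))

/-- The operator `T₁`: `T₁φ(v) = ∫ exp((yv − φ(y))/ĉ) p_σ(y) dy` with `ĉ = cσ²`. -/
def T1 (c σ : ℝ) (φ : ℝ → ℝ) (v : ℝ) : ℝ :=
  ∫ y : ℝ, Real.exp ((y * v - φ y) / (c * σ ^ 2)) * pdens σ y

/-- The operator `T₂`: `T₂Ψ(y) = ∫ exp((yv − Ψ(v))/ĉ) Pr(dv)`. -/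
def T2 (c σ : ℝ) (Pr : Measure ℝ) (Ψ : ℝ → ℝ) (y : ℝ) : ℝ :=
  ∫ v : ℝ, Real.exp ((y * v - Ψ v) / (c * σ ^ 2)) ∂Pr

/-- `Ψ = ĉ · log T₁φ`. -/
def Ψof (c σ : ℝ) (φ : ℝ → ℝ) (v : ℝ) : ℝ := c * σ ^ 2 * Real.log (T1 c σ φ v)

/-- Topological support of a measure on `ℝ`. -/
def msupport (Pr : Measure ℝ) : Set ℝ := {v | ∀ U : Set ℝ, IsOpen U → v ∈ U → 0 < Pr U}

/-- The unnormalised operator `T₀φ = ĉ · log T₂(ĉ log T₁ φ)`. -/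
def T0op (c σ : ℝ) (Pr : Measure ℝ) (φ : ℝ → ℝ) (y : ℝ) : ℝ :=
  c * σ ^ 2 * Real.log (T2 c σ Pr (Ψof c σ φ) y)

/-- The normalised operator `Tφ = ĉ · log ( T₂(ĉ log T₁ φ) / T₂(ĉ log T₁ φ)(0) )`. -/
def Tnorm (c σ : ℝ) (Pr : Measure ℝ) (φ : ℝ → ℝ) (y : ℝ) : ℝ :=
  c * σ ^ 2 * Real.log (T2 c σ Pr (Ψof c σ φ) y / T2 c σ Pr (Ψof c σ φ) 0)

lemma ae_mem_msupport (Pr : Measure ℝ) : ∀ᵐ v ∂Pr, v ∈ msupport Pr := by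
  rw [ae_iff]
  refine measure_null_of_locally_null _ fun x hx => ?_
  simp only [msupport, Set.mem_setOf_eq, not_forall] at hx
  obtain ⟨U, hUo, hxU, hU⟩ := hx
  exact ⟨U, mem_nhdsWithin_of_mem_nhds (hUo.mem_nhds hxU),
    le_antisymm (not_lt.mp hU) zero_le⟩

lemma eq_dirac_of_ne_null (Pr : Measure ℝ) [IsProbabilityMeasure Pr] (m : ℝ)
    (h : Pr {v | v ≠ m} = 0) : Pr = Measure.dirac m := by
  have hcompl : Pr {m}ᶜ = 0 := by
    have : {m}ᶜ = {v : ℝ | v ≠ m} := by ext v; simp [Set.mem_compl_iff]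
    rw [this]; exact h
  refine Measure.ext fun s hs => ?_
  rw [Measure.dirac_apply' m hs]
  by_cases hm : m ∈ s
  · have h1 : Pr sᶜ = 0 :=
      measure_mono_null (compl_subset_compl.mpr (singleton_subset_iff.mpr hm)) hcompl
    have h2 := measure_add_measure_compl (μ := Pr) hs
    rw [h1, add_zero, measure_univ] at h2
    simp [Set.indicator_of_mem hm, h2]
  · have hsub : s ⊆ {m}ᶜ := fun x hx => by
      simp only [Set.mem_compl_iff, Set.mem_singleton_iff]
      rintro rfl; exact hm hx
    simp [Set.indicator_of_notMem hm, measure_mono_null hsub hcompl]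

lemma measurable_Ψof (c σ : ℝ) (φ : ℝ → ℝ) (hφ : Measurable φ) : Measurable (Ψof c σ φ) := by
  have hT1 : Measurable (T1 c σ φ) := by
    have hf : StronglyMeasurable fun p : ℝ × ℝ =>
        Real.exp ((p.2 * p.1 - φ p.2) / (c * σ ^ 2)) * pdens σ p.2 := by
      apply Measurable.stronglyMeasurable
      have h1 : Measurable fun p : ℝ × ℝ => Real.exp ((p.2 * p.1 - φ p.2) / (c * σ ^ 2)) :=
        (((measurable_snd.mul measurable_fst).sub (hφ.comp measurable_snd)).div_const _).exp
      have h2 : Measurable fun y : ℝ => pdens σ y := by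
        unfold pdens
        exact measurable_const.mul (((measurable_id.pow_const 2).neg.div_const _).exp)
      exact h1.mul (h2.comp measurable_snd)
    have h3 : StronglyMeasurable fun v : ℝ =>
        ∫ y : ℝ, Real.exp ((y * v - φ y) / (c * σ ^ 2)) * pdens σ y := hf.integral_prod_right'
    exact h3.measurable
  exact measurable_const.mul hT1.log

lemma abs_pow_mul_exp_integrable (Pr : Measure ℝ)
    (hMV : ∀ r : ℝ, Integrable (fun v : ℝ => Real.exp (r * v)) Pr) (n : ℕ) (b : ℝ) :
    Integrable (fun v : ℝ => |v| ^ n * Real.exp (b * |v|)) Pr := by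
  have hg : Integrable
      (fun v : ℝ => ((Nat.factorial n : ℕ) : ℝ) * (Real.exp ((b + 1) * v) + Real.exp (-(b + 1) * v))) Pr :=
    ((hMV (b + 1)).add (hMV (-(b + 1)))).const_mul _
  refine hg.mono (Measurable.aestronglyMeasurable ?_) (Filter.Eventually.of_forall fun v => ?_)
  · exact (measurable_id.abs.pow_const n).mul ((measurable_id.abs.const_mul b).exp)
  · rw [Real.norm_eq_abs, Real.norm_eq_abs,
      abs_of_nonneg (by positivity : (0:ℝ) ≤ |v| ^ n * Real.exp (b * |v|)),
      abs_of_nonneg (by positivity :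
        (0:ℝ) ≤ ((Nat.factorial n : ℕ) : ℝ) * (Real.exp ((b + 1) * v) + Real.exp (-(b + 1) * v)))]
    have hfac : (0:ℝ) < ((Nat.factorial n : ℕ) : ℝ) := by exact_mod_cast n.factorial_pos
    have h1 : |v| ^ n ≤ ((Nat.factorial n : ℕ) : ℝ) * Real.exp |v| := by
      have h := Real.pow_div_factorial_le_exp _ (abs_nonneg v) n
      calc |v| ^ n = |v| ^ n / ((Nat.factorial n : ℕ) : ℝ) * ((Nat.factorial n : ℕ) : ℝ) := by field_simp
        _ ≤ Real.exp |v| * ((Nat.factorial n : ℕ) : ℝ) := mul_le_mul_of_nonneg_right h hfac.le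
        _ = ((Nat.factorial n : ℕ) : ℝ) * Real.exp |v| := mul_comm _ _
    have h2 : Real.exp ((b + 1) * |v|) ≤ Real.exp ((b + 1) * v) + Real.exp (-(b + 1) * v) := by
      rcases abs_choice v with h | h
      · rw [h]; exact le_add_of_nonneg_right (Real.exp_pos _).le
      · rw [h]
        have : (b + 1) * -v = -(b + 1) * v := by ring
        rw [this]; exact le_add_of_nonneg_left (Real.exp_pos _).le
    calc |v| ^ n * Real.exp (b * |v|)
        ≤ ((Nat.factorial n : ℕ) : ℝ) * Real.exp |v| * Real.exp (b * |v|) :=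
          mul_le_mul_of_nonneg_right h1 (Real.exp_pos _).le
      _ = ((Nat.factorial n : ℕ) : ℝ) * Real.exp ((b + 1) * |v|) := by
          rw [mul_assoc, ← Real.exp_add]; ring_nf
      _ ≤ ((Nat.factorial n : ℕ) : ℝ) * (Real.exp ((b + 1) * v) + Real.exp (-(b + 1) * v)) :=
          mul_le_mul_of_nonneg_left h2 hfac.le

lemma keyInt (c σ : ℝ) (hc : 0 < c) (hσ : 0 < σ) (Pr : Measure ℝ) [IsProbabilityMeasure Pr]
    (hMV : ∀ r : ℝ, Integrable (fun v : ℝ => Real.exp (r * v)) Pr)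
    (Ψ : ℝ → ℝ) (hΨ : Measurable Ψ) (K : ℝ) (hK : ∀ v ∈ msupport Pr, -K ≤ Ψ v)
    (n : ℕ) (y : ℝ) :
    Integrable (fun v : ℝ => v ^ n * Real.exp ((y * v - Ψ v) / (c * σ ^ 2))) Pr := by
  have hcs : (0:ℝ) < c * σ ^ 2 := by positivity
  have hg : Integrable (fun v : ℝ =>
      Real.exp (K / (c * σ ^ 2)) * (|v| ^ n * Real.exp ((|y| / (c * σ ^ 2)) * |v|))) Pr :=
    (abs_pow_mul_exp_integrable Pr hMV n _).const_mul _
  refine hg.mono (Measurable.aestronglyMeasurable ?_) ?_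
  · exact (measurable_id.pow_const n).mul
      (((measurable_id.const_mul y).sub hΨ).div_const _).exp
  · filter_upwards [ae_mem_msupport Pr] with v hv
    have hKv := hK v hv
    rw [Real.norm_eq_abs, Real.norm_eq_abs, abs_mul, abs_pow, Real.abs_exp,
      abs_of_nonneg (by positivity : (0:ℝ) ≤
        Real.exp (K / (c * σ ^ 2)) * (|v| ^ n * Real.exp ((|y| / (c * σ ^ 2)) * |v|)))]
    have hyv : y * v ≤ |y| * |v| := (le_abs_self _).trans (abs_mul y v).le
    have h1 : (y * v - Ψ v) / (c * σ ^ 2) ≤ K / (c * σ ^ 2) + |y| / (c * σ ^ 2) * |v| := by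
      have hnum : y * v - Ψ v ≤ |y| * |v| + K := by linarith
      calc (y * v - Ψ v) / (c * σ ^ 2) ≤ (|y| * |v| + K) / (c * σ ^ 2) := by gcongr
        _ = K / (c * σ ^ 2) + |y| / (c * σ ^ 2) * |v| := by ring
    calc |v| ^ n * Real.exp ((y * v - Ψ v) / (c * σ ^ 2))
        ≤ |v| ^ n * Real.exp (K / (c * σ ^ 2) + |y| / (c * σ ^ 2) * |v|) :=
          mul_le_mul_of_nonneg_left (Real.exp_le_exp.mpr h1) (by positivity)
      _ = Real.exp (K / (c * σ ^ 2)) * (|v| ^ n * Real.exp (|y| / (c * σ ^ 2) * |v|)) := by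
          rw [Real.exp_add]; ring

lemma keyDeriv (c σ : ℝ) (hc : 0 < c) (hσ : 0 < σ) (Pr : Measure ℝ) [IsProbabilityMeasure Pr]
    (hMV : ∀ r : ℝ, Integrable (fun v : ℝ => Real.exp (r * v)) Pr)
    (Ψ : ℝ → ℝ) (hΨ : Measurable Ψ) (K : ℝ) (hK : ∀ v ∈ msupport Pr, -K ≤ Ψ v)
    (n : ℕ) (y₀ : ℝ) :
    HasDerivAt (fun y : ℝ => ∫ v : ℝ, v ^ n * Real.exp ((y * v - Ψ v) / (c * σ ^ 2)) ∂Pr)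
      ((1 / (c * σ ^ 2)) *
        ∫ v : ℝ, v ^ (n + 1) * Real.exp ((y₀ * v - Ψ v) / (c * σ ^ 2)) ∂Pr) y₀ := by
  have hcs : (0:ℝ) < c * σ ^ 2 := by positivity
  have h := hasDerivAt_integral_of_dominated_loc_of_deriv_le (μ := Pr) (x₀ := y₀)
    (F := fun y v => v ^ n * Real.exp ((y * v - Ψ v) / (c * σ ^ 2)))
    (F' := fun y v => (1 / (c * σ ^ 2)) * (v ^ (n + 1) * Real.exp ((y * v - Ψ v) / (c * σ ^ 2))))
    (bound := fun v => (1 / (c * σ ^ 2)) * (Real.exp (K / (c * σ ^ 2)) *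
      (|v| ^ (n + 1) * Real.exp (((|y₀| + 1) / (c * σ ^ 2)) * |v|))))
    (Metric.ball_mem_nhds y₀ one_pos)
    (Filter.Eventually.of_forall fun x => Measurable.aestronglyMeasurable <|
      (measurable_id.pow_const n).mul
        (((measurable_id.const_mul x).sub hΨ).div_const _).exp)
    (keyInt c σ hc hσ Pr hMV Ψ hΨ K hK n y₀)
    (Measurable.aestronglyMeasurable <| Measurable.const_mul
      ((measurable_id.pow_const (n + 1)).mul
        (((measurable_id.const_mul y₀).sub hΨ).div_const _).exp) _)
    ?_
    (((abs_pow_mul_exp_integrable Pr hMV (n + 1) _).const_mul _).const_mul _)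
    (Filter.Eventually.of_forall fun v => fun x _ => ?_)
  · have h2 := h.2
    rwa [integral_const_mul] at h2
  · -- the bound
    filter_upwards [ae_mem_msupport Pr] with v hv x hx
    have hKv := hK v hv
    have hxabs : |x| ≤ |y₀| + 1 := by
      have : |x - y₀| < 1 := by simpa [Real.dist_eq] using hx
      calc |x| = |x - y₀ + y₀| := by ring_nf
        _ ≤ |x - y₀| + |y₀| := abs_add_le _ _
        _ ≤ |y₀| + 1 := by linarith
    rw [Real.norm_eq_abs, abs_mul, abs_mul, abs_pow, Real.abs_exp,
      abs_of_pos (by positivity : (0:ℝ) < 1 / (c * σ ^ 2))]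
    have hxv : x * v ≤ (|y₀| + 1) * |v| :=
      (le_abs_self _).trans ((abs_mul x v).le.trans
        (mul_le_mul_of_nonneg_right hxabs (abs_nonneg v)))
    have hexp : Real.exp ((x * v - Ψ v) / (c * σ ^ 2)) ≤
        Real.exp (K / (c * σ ^ 2)) * Real.exp ((|y₀| + 1) / (c * σ ^ 2) * |v|) := by
      rw [← Real.exp_add]
      apply Real.exp_le_exp.mpr
      have hnum : x * v - Ψ v ≤ (|y₀| + 1) * |v| + K := by linarith
      calc (x * v - Ψ v) / (c * σ ^ 2) ≤ ((|y₀| + 1) * |v| + K) / (c * σ ^ 2) := by gcongr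
        _ = K / (c * σ ^ 2) + (|y₀| + 1) / (c * σ ^ 2) * |v| := by ring
    calc 1 / (c * σ ^ 2) * (|v| ^ (n + 1) * Real.exp ((x * v - Ψ v) / (c * σ ^ 2)))
        ≤ 1 / (c * σ ^ 2) * (|v| ^ (n + 1) *
            (Real.exp (K / (c * σ ^ 2)) * Real.exp ((|y₀| + 1) / (c * σ ^ 2) * |v|))) := by
          apply mul_le_mul_of_nonneg_left
            (mul_le_mul_of_nonneg_left hexp (by positivity)) (by positivity)
      _ = 1 / (c * σ ^ 2) * (Real.exp (K / (c * σ ^ 2)) *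
            (|v| ^ (n + 1) * Real.exp ((|y₀| + 1) / (c * σ ^ 2) * |v|))) := by ring
  · -- differentiability
    have h1 : HasDerivAt (fun x : ℝ => (x * v - Ψ v) / (c * σ ^ 2)) (v / (c * σ ^ 2)) x :=
      ((hasDerivAt_mul_const v).sub_const (Ψ v)).div_const _
    have h2 := (h1.exp).const_mul (v ^ n)
    refine h2.congr_deriv (Eq.symm ?_)
    ring


/-- under all exponential moments and `Pr` not a point mass, for `φ ∈ D(T₁)` with
`Ψ := ĉ log T₁φ` bounded below on the support, `Tφ` is twice differentiable with second
derivative given by the (normalised) variance formula, which is strictly positive; hence `Tφ`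
is strictly convex. -/
theorem stmt4 (c σ : ℝ) (hc : 0 < c) (hσ : 0 < σ)
    (Pr : Measure ℝ) [IsProbabilityMeasure Pr]
    (hMV : ∀ r : ℝ, Integrable (fun v : ℝ => Real.exp (r * v)) Pr)
    (hnd : ∀ v : ℝ, Pr ≠ Measure.dirac v)
    (φ : ℝ → ℝ) (hφ : Measurable φ)
    (hD1 : ∀ v ∈ msupport Pr,
      Integrable (fun y : ℝ => Real.exp ((y * v - φ y) / (c * σ ^ 2)) * pdens σ y) ∧
        0 < T1 c σ φ v)
    (K : ℝ) (hK : ∀ v ∈ msupport Pr, -K ≤ Ψof c σ φ v) :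
    (∀ y : ℝ, HasDerivAt (deriv (Tnorm c σ Pr φ))
      ((1 / (c * σ ^ 2)) *
        ((∫ v : ℝ, v ^ 2 * Real.exp ((y * v - Ψof c σ φ v) / (c * σ ^ 2)) ∂Pr) /
          (∫ v : ℝ, Real.exp ((y * v - Ψof c σ φ v) / (c * σ ^ 2)) ∂Pr) -
         ((∫ v : ℝ, v * Real.exp ((y * v - Ψof c σ φ v) / (c * σ ^ 2)) ∂Pr) /
          (∫ v : ℝ, Real.exp ((y * v - Ψof c σ φ v) / (c * σ ^ 2)) ∂Pr)) ^ 2)) y) ∧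
    (∀ y : ℝ, 0 <
      (1 / (c * σ ^ 2)) *
        ((∫ v : ℝ, v ^ 2 * Real.exp ((y * v - Ψof c σ φ v) / (c * σ ^ 2)) ∂Pr) /
          (∫ v : ℝ, Real.exp ((y * v - Ψof c σ φ v) / (c * σ ^ 2)) ∂Pr) -
         ((∫ v : ℝ, v * Real.exp ((y * v - Ψof c σ φ v) / (c * σ ^ 2)) ∂Pr) /
          (∫ v : ℝ, Real.exp ((y * v - Ψof c σ φ v) / (c * σ ^ 2)) ∂Pr)) ^ 2)) ∧
    StrictConvexOn ℝ Set.univ (Tnorm c σ Pr φ) := by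
  have hcs : (0:ℝ) < c * σ ^ 2 := by positivity
  set Ψ := Ψof c σ φ with hΨdef
  have hΨm : Measurable Ψ := measurable_Ψof c σ φ hφ
  -- integrability
  have iInt : ∀ (n : ℕ) (y : ℝ),
      Integrable (fun v : ℝ => v ^ n * Real.exp ((y * v - Ψ v) / (c * σ ^ 2))) Pr :=
    fun n y => keyInt c σ hc hσ Pr hMV Ψ hΨm K hK n y
  have iP : ∀ y : ℝ, Integrable (fun v : ℝ => Real.exp ((y * v - Ψ v) / (c * σ ^ 2))) Pr := by
    intro y; have := iInt 0 y; simpa using this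
  have iM : ∀ y : ℝ, Integrable (fun v : ℝ => v * Real.exp ((y * v - Ψ v) / (c * σ ^ 2))) Pr := by
    intro y; have := iInt 1 y; simpa using this
  have iS : ∀ y : ℝ,
      Integrable (fun v : ℝ => v ^ 2 * Real.exp ((y * v - Ψ v) / (c * σ ^ 2))) Pr :=
    fun y => iInt 2 y
  -- positivity of the partition function
  have hPpos : ∀ y : ℝ, 0 < ∫ v : ℝ, Real.exp ((y * v - Ψ v) / (c * σ ^ 2)) ∂Pr := by
    intro y
    rw [integral_pos_iff_support_of_nonneg (fun v => (Real.exp_pos _).le) (iP y)]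
    have hsupp : Function.support (fun v : ℝ => Real.exp ((y * v - Ψ v) / (c * σ ^ 2))) =
        Set.univ := by
      ext v; simp [Function.mem_support, (Real.exp_pos _).ne']
    rw [hsupp, measure_univ]
    exact zero_lt_one
  -- derivatives under the integral
  have hDP : ∀ y : ℝ, HasDerivAt
      (fun y : ℝ => ∫ v : ℝ, Real.exp ((y * v - Ψ v) / (c * σ ^ 2)) ∂Pr)
      ((1 / (c * σ ^ 2)) * ∫ v : ℝ, v * Real.exp ((y * v - Ψ v) / (c * σ ^ 2)) ∂Pr) y := by
    intro y
    have := keyDeriv c σ hc hσ Pr hMV Ψ hΨm K hK 0 y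
    simpa using this
  have hDM : ∀ y : ℝ, HasDerivAt
      (fun y : ℝ => ∫ v : ℝ, v * Real.exp ((y * v - Ψ v) / (c * σ ^ 2)) ∂Pr)
      ((1 / (c * σ ^ 2)) * ∫ v : ℝ, v ^ 2 * Real.exp ((y * v - Ψ v) / (c * σ ^ 2)) ∂Pr) y := by
    intro y
    have := keyDeriv c σ hc hσ Pr hMV Ψ hΨm K hK 1 y
    simpa using this
  -- Tnorm as a difference of logs
  have hTeq : Tnorm c σ Pr φ = fun y : ℝ =>
      c * σ ^ 2 * Real.log (∫ v : ℝ, Real.exp ((y * v - Ψ v) / (c * σ ^ 2)) ∂Pr) -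
      c * σ ^ 2 * Real.log (∫ v : ℝ, Real.exp ((0 * v - Ψ v) / (c * σ ^ 2)) ∂Pr) := by
    funext y
    show c * σ ^ 2 * Real.log (T2 c σ Pr Ψ y / T2 c σ Pr Ψ 0) = _
    rw [show T2 c σ Pr Ψ y = ∫ v : ℝ, Real.exp ((y * v - Ψ v) / (c * σ ^ 2)) ∂Pr from rfl,
      show T2 c σ Pr Ψ 0 = ∫ v : ℝ, Real.exp ((0 * v - Ψ v) / (c * σ ^ 2)) ∂Pr from rfl,
      Real.log_div (hPpos y).ne' (hPpos 0).ne']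
    ring
  -- first derivative of Tnorm
  have hD1T : ∀ y : ℝ, HasDerivAt (Tnorm c σ Pr φ)
      ((∫ v : ℝ, v * Real.exp ((y * v - Ψ v) / (c * σ ^ 2)) ∂Pr) /
        (∫ v : ℝ, Real.exp ((y * v - Ψ v) / (c * σ ^ 2)) ∂Pr)) y := by
    intro y
    rw [hTeq]
    have h := (((hDP y).log (hPpos y).ne').const_mul (c * σ ^ 2)).sub_const
      (c * σ ^ 2 * Real.log (∫ v : ℝ, Real.exp ((0 * v - Ψ v) / (c * σ ^ 2)) ∂Pr))
    refine h.congr_deriv (Eq.symm ?_)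
    have hP := (hPpos y).ne'
    generalize (∫ v : ℝ, Real.exp ((y * v - Ψ v) / (c * σ ^ 2)) ∂Pr) = P at hP ⊢
    generalize (∫ v : ℝ, v * Real.exp ((y * v - Ψ v) / (c * σ ^ 2)) ∂Pr) = M
    generalize (∫ v : ℝ, v ^ 2 * Real.exp ((y * v - Ψ v) / (c * σ ^ 2)) ∂Pr) = S
    field_simp
  have hderiv_eq : deriv (Tnorm c σ Pr φ) = fun y : ℝ =>
      (∫ v : ℝ, v * Real.exp ((y * v - Ψ v) / (c * σ ^ 2)) ∂Pr) /
        (∫ v : ℝ, Real.exp ((y * v - Ψ v) / (c * σ ^ 2)) ∂Pr) :=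
    funext fun y => (hD1T y).deriv
  -- second derivative
  have hD2T : ∀ y : ℝ, HasDerivAt (deriv (Tnorm c σ Pr φ))
      ((1 / (c * σ ^ 2)) *
        ((∫ v : ℝ, v ^ 2 * Real.exp ((y * v - Ψ v) / (c * σ ^ 2)) ∂Pr) /
          (∫ v : ℝ, Real.exp ((y * v - Ψ v) / (c * σ ^ 2)) ∂Pr) -
         ((∫ v : ℝ, v * Real.exp ((y * v - Ψ v) / (c * σ ^ 2)) ∂Pr) /
          (∫ v : ℝ, Real.exp ((y * v - Ψ v) / (c * σ ^ 2)) ∂Pr)) ^ 2)) y := by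
    intro y
    rw [hderiv_eq]
    have h := (hDM y).div (hDP y) (hPpos y).ne'
    refine h.congr_deriv (Eq.symm ?_)
    have hP := (hPpos y).ne'
    generalize (∫ v : ℝ, Real.exp ((y * v - Ψ v) / (c * σ ^ 2)) ∂Pr) = P at hP ⊢
    generalize (∫ v : ℝ, v * Real.exp ((y * v - Ψ v) / (c * σ ^ 2)) ∂Pr) = M
    generalize (∫ v : ℝ, v ^ 2 * Real.exp ((y * v - Ψ v) / (c * σ ^ 2)) ∂Pr) = S
    field_simp
  -- positivity of the second derivative
  have hpos2 : ∀ y : ℝ, 0 <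
      (1 / (c * σ ^ 2)) *
        ((∫ v : ℝ, v ^ 2 * Real.exp ((y * v - Ψ v) / (c * σ ^ 2)) ∂Pr) /
          (∫ v : ℝ, Real.exp ((y * v - Ψ v) / (c * σ ^ 2)) ∂Pr) -
         ((∫ v : ℝ, v * Real.exp ((y * v - Ψ v) / (c * σ ^ 2)) ∂Pr) /
          (∫ v : ℝ, Real.exp ((y * v - Ψ v) / (c * σ ^ 2)) ∂Pr)) ^ 2) := by
    intro y
    set P := ∫ v : ℝ, Real.exp ((y * v - Ψ v) / (c * σ ^ 2)) ∂Pr with hPdef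
    set M := ∫ v : ℝ, v * Real.exp ((y * v - Ψ v) / (c * σ ^ 2)) ∂Pr with hMdef
    set S := ∫ v : ℝ, v ^ 2 * Real.exp ((y * v - Ψ v) / (c * σ ^ 2)) ∂Pr with hSdef
    have hPy : 0 < P := hPpos y
    set m := M / P with hmdef
    have hexpand : (fun v : ℝ => (v - m) ^ 2 * Real.exp ((y * v - Ψ v) / (c * σ ^ 2))) =
        fun v : ℝ => v ^ 2 * Real.exp ((y * v - Ψ v) / (c * σ ^ 2)) -
          (2 * m) * (v * Real.exp ((y * v - Ψ v) / (c * σ ^ 2))) +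
          m ^ 2 * Real.exp ((y * v - Ψ v) / (c * σ ^ 2)) := by
      funext v; ring
    have iB : Integrable (fun v : ℝ => 2 * m * (v * Real.exp ((y * v - Ψ v) / (c * σ ^ 2)))) Pr :=
      (iM y).const_mul (2 * m)
    have iC : Integrable (fun v : ℝ => m ^ 2 * Real.exp ((y * v - Ψ v) / (c * σ ^ 2))) Pr :=
      (iP y).const_mul (m ^ 2)
    have iA : Integrable (fun v : ℝ => v ^ 2 * Real.exp ((y * v - Ψ v) / (c * σ ^ 2)) -
        2 * m * (v * Real.exp ((y * v - Ψ v) / (c * σ ^ 2)))) Pr := (iS y).sub iB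
    have iQ : Integrable
        (fun v : ℝ => (v - m) ^ 2 * Real.exp ((y * v - Ψ v) / (c * σ ^ 2))) Pr := by
      rw [hexpand]
      exact iA.add iC
    have hQval : (∫ v : ℝ, (v - m) ^ 2 * Real.exp ((y * v - Ψ v) / (c * σ ^ 2)) ∂Pr) =
        S - 2 * m * M + m ^ 2 * P := by
      rw [hexpand, integral_add iA iC, integral_sub (iS y) iB, integral_const_mul,
        integral_const_mul]
    have hQpos : 0 < ∫ v : ℝ, (v - m) ^ 2 * Real.exp ((y * v - Ψ v) / (c * σ ^ 2)) ∂Pr := by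
      rcases (integral_nonneg (fun v => by positivity :
          0 ≤ fun v : ℝ => (v - m) ^ 2 * Real.exp ((y * v - Ψ v) / (c * σ ^ 2)))).lt_or_eq
        with h | h
      · exact h
      · exfalso
        have h0 : (fun v : ℝ => (v - m) ^ 2 * Real.exp ((y * v - Ψ v) / (c * σ ^ 2))) =ᵐ[Pr]
            0 := by
          rw [← integral_eq_zero_iff_of_nonneg (fun v => by positivity) iQ]
          exact h.symm
        have hae : ∀ᵐ v ∂Pr, v = m := by
          filter_upwards [h0] with v hv
          simp only [Pi.zero_apply] at hv
          have hW := (Real.exp_pos ((y * v - Ψ v) / (c * σ ^ 2))).ne'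
          have h2 : (v - m) ^ 2 = 0 := (mul_eq_zero.mp hv).resolve_right hW
          have := sq_eq_zero_iff.mp h2
          linarith
        have hnull : Pr {v : ℝ | v ≠ m} = 0 := ae_iff.mp hae
        exact hnd m (eq_dirac_of_ne_null Pr m hnull)
    have hkey : S / P - (M / P) ^ 2 =
        (∫ v : ℝ, (v - m) ^ 2 * Real.exp ((y * v - Ψ v) / (c * σ ^ 2)) ∂Pr) / P := by
      rw [hQval, hmdef]
      field_simp
      ring
    rw [hkey]
    exact mul_pos (by positivity) (div_pos hQpos hPy)
  refine ⟨hD2T, hpos2, ?_⟩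
  -- strict convexity
  refine strictConvexOn_of_deriv2_pos convex_univ
    ((continuous_iff_continuousAt.mpr fun y => (hD1T y).continuousAt).continuousOn) ?_
  intro x _
  have h2 : deriv^[2] (Tnorm c σ Pr φ) x = deriv (deriv (Tnorm c σ Pr φ)) x := by
    rw [show (2 : ℕ) = 1 + 1 from rfl, Function.iterate_succ_apply', Function.iterate_one]
  rw [h2, (hD2T x).deriv]
  exact hpos2 x


end
end

section
/- Let p ∈ (0,1), c > 0, σ > 0 and ĉ := cσ². The function G : (0, 1/p) → ℝ defined by G(a) := ∫_ℝ e^{y/ĉ} / ( p(e^{y/ĉ} − 1) + a^{−1} ) · p_σ(y) dy is strictly increasing, with G(a) → 0 as a → 0+ and G(a) → 1/p as a → (1/p)−. Consequently there exists a unique a ∈ (0, 1/p) such that G(a) = 1. -/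
open MeasureTheory Real Set Filter Topology

noncomputable section

/-- The function `G(a) = ∫ e^{y/ĉ} / ( p(e^{y/ĉ} − 1) + a⁻¹ ) p_σ(y) dy` from the Bernoulli
fixed-point equation. -/
def Gber (p c σ : ℝ) (a : ℝ) : ℝ :=
  ∫ y : ℝ,
    Real.exp (y / (c * σ ^ 2)) / (p * (Real.exp (y / (c * σ ^ 2)) - 1) + a⁻¹) * pdens σ y

lemma pdens_pos {σ : ℝ} (hσ : 0 < σ) (y : ℝ) : 0 < pdens σ y := by
  have h2 : (0:ℝ) < 2 * π * σ ^ 2 := by positivity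
  unfold pdens
  positivity

lemma pdens_continuous (σ : ℝ) : Continuous (pdens σ) := by
  unfold pdens
  fun_prop

lemma integrable_exp_mul_gauss {b : ℝ} (hb : 0 < b) (t : ℝ) :
    Integrable fun y : ℝ => Real.exp (t * y) * Real.exp (-b * y ^ 2) := by
  have h1 : Integrable fun y : ℝ => Real.exp (-b * (y - t / (2 * b)) ^ 2) :=
    (integrable_exp_neg_mul_sq hb).comp_sub_right _
  have h2 := h1.const_mul (Real.exp (t ^ 2 / (4 * b)))
  refine h2.congr (Eventually.of_forall fun y => ?_)
  dsimp only
  rw [← Real.exp_add, ← Real.exp_add]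
  congr 1
  field_simp
  ring

lemma integrable_exp_mul_pdens {σ : ℝ} (hσ : 0 < σ) (t : ℝ) :
    Integrable fun y : ℝ => Real.exp (t * y) * pdens σ y := by
  have hb : (0:ℝ) < (2 * σ ^ 2)⁻¹ := by positivity
  have h := (integrable_exp_mul_gauss hb t).const_mul ((Real.sqrt (2 * π * σ ^ 2))⁻¹)
  refine h.congr (Eventually.of_forall fun y => ?_)
  dsimp only
  unfold pdens
  rw [show -(y ^ 2) / (2 * σ ^ 2) = -(2 * σ ^ 2)⁻¹ * y ^ 2 by ring]
  ring

lemma integrable_pdens {σ : ℝ} (hσ : 0 < σ) : Integrable (pdens σ) := by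
  have := integrable_exp_mul_pdens hσ 0
  simpa using this

lemma integral_pdens {σ : ℝ} (hσ : 0 < σ) : ∫ y : ℝ, pdens σ y = 1 := by
  have h2 : (0:ℝ) < 2 * π * σ ^ 2 := by positivity
  have key : ∫ y : ℝ, pdens σ y
      = (Real.sqrt (2 * π * σ ^ 2))⁻¹ * ∫ y : ℝ, Real.exp (-(2 * σ ^ 2)⁻¹ * y ^ 2) := by
    rw [← MeasureTheory.integral_const_mul]
    congr 1
    funext y
    unfold pdens
    rw [show -(y ^ 2) / (2 * σ ^ 2) = -(2 * σ ^ 2)⁻¹ * y ^ 2 by ring]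
  rw [key, integral_gaussian,
    show π / (2 * σ ^ 2)⁻¹ = 2 * π * σ ^ 2 by field_simp]
  exact inv_mul_cancel₀ (Real.sqrt_ne_zero'.mpr h2)

/-- `G` is strictly increasing on `(0, 1/p)`, tends to `0` at `0+` and to `1/p`
at `(1/p)−`; consequently there is a unique `a ∈ (0, 1/p)` with `G(a) = 1`. -/
theorem stmt10 (p c σ : ℝ) (hp : p ∈ Set.Ioo (0 : ℝ) 1) (hc : 0 < c) (hσ : 0 < σ) :
    StrictMonoOn (Gber p c σ) (Set.Ioo 0 p⁻¹) ∧
    Filter.Tendsto (Gber p c σ) (nhdsWithin 0 (Set.Ioo 0 p⁻¹)) (nhds 0) ∧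
    Filter.Tendsto (Gber p c σ) (nhdsWithin p⁻¹ (Set.Ioo 0 p⁻¹)) (nhds p⁻¹) ∧
    (∃! a : ℝ, a ∈ Set.Ioo 0 p⁻¹ ∧ Gber p c σ a = 1) := by
  obtain ⟨hp0, hp1⟩ := hp
  have hpinv1 : (1:ℝ) < p⁻¹ := one_lt_inv_iff₀.mpr ⟨hp0, hp1⟩
  have hIpos : (0:ℝ) < p⁻¹ := lt_trans one_pos hpinv1
  have hch : (0:ℝ) < c * σ ^ 2 := by positivity
  set ch := c * σ ^ 2 with hchdef
  set f : ℝ → ℝ → ℝ := fun a y =>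
    Real.exp (y / ch) / (p * (Real.exp (y / ch) - 1) + a⁻¹) * pdens σ y with hfdef
  have hG : ∀ a, Gber p c σ a = ∫ y, f a y := fun a => rfl
  have hap : ∀ a ∈ Ioo (0:ℝ) p⁻¹, p < a⁻¹ := by
    intro a ha
    have := inv_strictAnti₀ ha.1 ha.2
    rwa [inv_inv] at this
  have hD : ∀ a ∈ Ioo (0:ℝ) p⁻¹, ∀ y : ℝ,
      p * Real.exp (y / ch) ≤ p * (Real.exp (y / ch) - 1) + a⁻¹ ∧
      a⁻¹ - p ≤ p * (Real.exp (y / ch) - 1) + a⁻¹ ∧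
      0 < p * (Real.exp (y / ch) - 1) + a⁻¹ := by
    intro a ha y
    have h1 : p < a⁻¹ := hap a ha
    have he : 0 < Real.exp (y / ch) := Real.exp_pos _
    refine ⟨by nlinarith, by nlinarith, by nlinarith⟩
  have hf_nonneg : ∀ a ∈ Ioo (0:ℝ) p⁻¹, ∀ y, 0 ≤ f a y := by
    intro a ha y
    exact mul_nonneg (div_nonneg (Real.exp_pos _).le (hD a ha y).2.2.le) (pdens_pos hσ y).le
  have hf_le : ∀ a ∈ Ioo (0:ℝ) p⁻¹, ∀ y, f a y ≤ p⁻¹ * pdens σ y := by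
    intro a ha y
    obtain ⟨h1, h2, h3⟩ := hD a ha y
    have he := Real.exp_pos (y / ch)
    have hpd := pdens_pos hσ y
    have hdiv : Real.exp (y / ch) / (p * (Real.exp (y / ch) - 1) + a⁻¹)
        ≤ Real.exp (y / ch) / (p * Real.exp (y / ch)) :=
      div_le_div_of_nonneg_left he.le (by positivity) h1
    have heq : Real.exp (y / ch) / (p * Real.exp (y / ch)) = p⁻¹ := by
      field_simp
    calc f a y ≤ Real.exp (y / ch) / (p * Real.exp (y / ch)) * pdens σ y :=
          mul_le_mul_of_nonneg_right hdiv hpd.le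
      _ = p⁻¹ * pdens σ y := by rw [heq]
  have hf_cont : ∀ a ∈ Ioo (0:ℝ) p⁻¹, Continuous (f a) := by
    intro a ha
    have hd : ∀ y : ℝ, p * (Real.exp (y / ch) - 1) + a⁻¹ ≠ 0 := fun y => (hD a ha y).2.2.ne'
    have hc1 : Continuous fun y : ℝ => Real.exp (y / ch) :=
      Real.continuous_exp.comp (continuous_id.div_const _)
    exact ((hc1.div ((continuous_const.mul (hc1.sub continuous_const)).add continuous_const)
      hd).mul (pdens_continuous σ))
  have hpd_int : Integrable (pdens σ) := integrable_pdens hσ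
  have hf_int : ∀ a ∈ Ioo (0:ℝ) p⁻¹, Integrable (f a) := by
    intro a ha
    refine (hpd_int.const_mul p⁻¹).mono' (hf_cont a ha).aestronglyMeasurable
      (Eventually.of_forall fun y => ?_)
    rw [Real.norm_eq_abs, abs_of_nonneg (hf_nonneg a ha y)]
    exact hf_le a ha y
  -- strict monotonicity
  have hmono : StrictMonoOn (Gber p c σ) (Ioo 0 p⁻¹) := by
    intro a ha b hb hab
    have hpt : ∀ y, f a y < f b y := by
      intro y
      have hbinva : b⁻¹ < a⁻¹ := inv_strictAnti₀ ha.1 hab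
      have hDb := (hD b hb y).2.2
      have he := Real.exp_pos (y / ch)
      have hpd := pdens_pos hσ y
      apply mul_lt_mul_of_pos_right _ hpd
      exact div_lt_div_of_pos_left he hDb (by linarith)
    have hsub : Integrable (fun y => f b y - f a y) := (hf_int b hb).sub (hf_int a ha)
    have hpos : 0 < ∫ y, (f b y - f a y) := by
      rw [integral_pos_iff_support_of_nonneg (fun y => sub_nonneg.2 (hpt y).le) hsub]
      have hs : Function.support (fun y => f b y - f a y) = univ :=
        eq_univ_of_forall fun y => sub_ne_zero.2 (hpt y).ne'
      rw [hs, Real.volume_univ]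
      exact ENNReal.zero_lt_top
    rw [integral_sub (hf_int b hb) (hf_int a ha)] at hpos
    rw [hG a, hG b]
    linarith
  -- auxiliary integrable functions
  have hCp_int : Integrable fun y : ℝ => Real.exp (y / ch) * pdens σ y := by
    refine (integrable_exp_mul_pdens hσ ch⁻¹).congr (Eventually.of_forall fun y => ?_)
    dsimp only
    rw [show ch⁻¹ * y = y / ch by ring]
  have hCm_int : Integrable fun y : ℝ => Real.exp (-(y / ch)) * pdens σ y := by
    refine (integrable_exp_mul_pdens hσ (-ch⁻¹)).congr (Eventually.of_forall fun y => ?_)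
    dsimp only
    rw [show -ch⁻¹ * y = -(y / ch) by ring]
  set Cp := ∫ y : ℝ, Real.exp (y / ch) * pdens σ y with hCpdef
  set Cm := ∫ y : ℝ, Real.exp (-(y / ch)) * pdens σ y with hCmdef
  -- tendsto at 0
  have hub : ∀ a ∈ Ioo (0:ℝ) p⁻¹, Gber p c σ a ≤ (a⁻¹ - p)⁻¹ * Cp := by
    intro a ha
    rw [hG]
    have hd' : 0 < a⁻¹ - p := sub_pos.2 (hap a ha)
    have hb : ∀ y, f a y ≤ (a⁻¹ - p)⁻¹ * (Real.exp (y / ch) * pdens σ y) := by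
      intro y
      obtain ⟨h1, h2, h3⟩ := hD a ha y
      have he := Real.exp_pos (y / ch)
      have hpd := pdens_pos hσ y
      have hdiv : Real.exp (y / ch) / (p * (Real.exp (y / ch) - 1) + a⁻¹)
          ≤ Real.exp (y / ch) / (a⁻¹ - p) :=
        div_le_div_of_nonneg_left he.le hd' h2
      calc f a y ≤ Real.exp (y / ch) / (a⁻¹ - p) * pdens σ y :=
            mul_le_mul_of_nonneg_right hdiv hpd.le
        _ = (a⁻¹ - p)⁻¹ * (Real.exp (y / ch) * pdens σ y) := by ring
    calc (∫ y, f a y) ≤ ∫ y, (a⁻¹ - p)⁻¹ * (Real.exp (y / ch) * pdens σ y) :=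
          integral_mono (hf_int a ha) (hCp_int.const_mul _) hb
      _ = (a⁻¹ - p)⁻¹ * Cp := MeasureTheory.integral_const_mul _ _
  have h0 : Tendsto (Gber p c σ) (𝓝[Ioo (0:ℝ) p⁻¹] 0) (𝓝 0) := by
    have hmem : ∀ᶠ a in 𝓝[Ioo (0:ℝ) p⁻¹] 0, a ∈ Ioo (0:ℝ) p⁻¹ := eventually_mem_nhdsWithin
    have hbnd : Tendsto (fun a : ℝ => (a⁻¹ - p)⁻¹ * Cp) (𝓝[Ioo (0:ℝ) p⁻¹] 0) (𝓝 0) := by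
      have h1 : Tendsto (fun a : ℝ => a⁻¹) (𝓝[Ioo (0:ℝ) p⁻¹] 0) atTop :=
        tendsto_inv_nhdsGT_zero.mono_left (nhdsWithin_mono 0 (fun x hx => hx.1))
      have h2 : Tendsto (fun a : ℝ => a⁻¹ - p) (𝓝[Ioo (0:ℝ) p⁻¹] 0) atTop :=
        tendsto_atTop_add_const_right _ (-p) h1
      have h3 := h2.inv_tendsto_atTop
      have h4 : Tendsto (fun a : ℝ => (a⁻¹ - p)⁻¹) (𝓝[Ioo (0:ℝ) p⁻¹] 0) (𝓝 0) := h3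
      simpa using h4.mul_const Cp
    refine tendsto_of_tendsto_of_tendsto_of_le_of_le' tendsto_const_nhds hbnd
      (hmem.mono fun a ha => ?_) (hmem.mono fun a ha => hub a ha)
    rw [hG]
    exact integral_nonneg (hf_nonneg a ha)
  -- tendsto at p⁻¹
  have hkey : ∀ a ∈ Ioo (0:ℝ) p⁻¹,
      p⁻¹ - (a⁻¹ - p) * (p⁻¹ * p⁻¹) * Cm ≤ Gber p c σ a ∧ Gber p c σ a ≤ p⁻¹ := by
    intro a ha
    have hd' : 0 < a⁻¹ - p := sub_pos.2 (hap a ha)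
    have hup : Gber p c σ a ≤ p⁻¹ := by
      rw [hG]
      calc (∫ y, f a y) ≤ ∫ y, p⁻¹ * pdens σ y :=
            integral_mono (hf_int a ha) (hpd_int.const_mul _) (hf_le a ha)
        _ = p⁻¹ := by rw [MeasureTheory.integral_const_mul, integral_pdens hσ, mul_one]
    refine ⟨?_, hup⟩
    have hdiff : p⁻¹ - Gber p c σ a = ∫ y, (p⁻¹ * pdens σ y - f a y) := by
      rw [hG, integral_sub (hpd_int.const_mul _) (hf_int a ha),
        MeasureTheory.integral_const_mul, integral_pdens hσ, mul_one]
    have hptb : ∀ y, p⁻¹ * pdens σ y - f a y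
        ≤ (a⁻¹ - p) * (p⁻¹ * p⁻¹) * (Real.exp (-(y / ch)) * pdens σ y) := by
      intro y
      obtain ⟨h1, h2, h3⟩ := hD a ha y
      have he := Real.exp_pos (y / ch)
      have hpd := pdens_pos hσ y
      have heq1 : p⁻¹ - Real.exp (y / ch) / (p * (Real.exp (y / ch) - 1) + a⁻¹)
          = (a⁻¹ - p) / (p * (p * (Real.exp (y / ch) - 1) + a⁻¹)) := by
        rw [inv_eq_one_div, div_sub_div _ _ hp0.ne' h3.ne']
        congr 1
        ring
      have heq2 : (a⁻¹ - p) * (p⁻¹ * p⁻¹) * Real.exp (-(y / ch))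
          = (a⁻¹ - p) / (p * (p * Real.exp (y / ch))) := by
        have hne : p * (p * Real.exp (y / ch)) ≠ 0 := by positivity
        rw [Real.exp_neg, eq_div_iff hne]
        field_simp
      have hdiv : (a⁻¹ - p) / (p * (p * (Real.exp (y / ch) - 1) + a⁻¹))
          ≤ (a⁻¹ - p) / (p * (p * Real.exp (y / ch))) :=
        div_le_div_of_nonneg_left hd'.le (by positivity)
          (mul_le_mul_of_nonneg_left h1 hp0.le)
      calc p⁻¹ * pdens σ y - f a y
          = (p⁻¹ - Real.exp (y / ch) / (p * (Real.exp (y / ch) - 1) + a⁻¹)) * pdens σ y := by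
            rw [hfdef]; ring
        _ = (a⁻¹ - p) / (p * (p * (Real.exp (y / ch) - 1) + a⁻¹)) * pdens σ y := by rw [heq1]
        _ ≤ (a⁻¹ - p) / (p * (p * Real.exp (y / ch))) * pdens σ y :=
            mul_le_mul_of_nonneg_right hdiv hpd.le
        _ = (a⁻¹ - p) * (p⁻¹ * p⁻¹) * (Real.exp (-(y / ch)) * pdens σ y) := by
            rw [← heq2]; ring
    have hbound : p⁻¹ - Gber p c σ a ≤ (a⁻¹ - p) * (p⁻¹ * p⁻¹) * Cm := by
      rw [hdiff]
      calc (∫ y, (p⁻¹ * pdens σ y - f a y))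
          ≤ ∫ y, (a⁻¹ - p) * (p⁻¹ * p⁻¹) * (Real.exp (-(y / ch)) * pdens σ y) :=
            integral_mono ((hpd_int.const_mul _).sub (hf_int a ha))
              (hCm_int.const_mul _) hptb
        _ = (a⁻¹ - p) * (p⁻¹ * p⁻¹) * Cm := MeasureTheory.integral_const_mul _ _
    linarith
  have hP : Tendsto (Gber p c σ) (𝓝[Ioo (0:ℝ) p⁻¹] p⁻¹) (𝓝 p⁻¹) := by
    have hmem : ∀ᶠ a in 𝓝[Ioo (0:ℝ) p⁻¹] p⁻¹, a ∈ Ioo (0:ℝ) p⁻¹ := eventually_mem_nhdsWithin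
    have hlowt : Tendsto (fun a : ℝ => p⁻¹ - (a⁻¹ - p) * (p⁻¹ * p⁻¹) * Cm)
        (𝓝[Ioo (0:ℝ) p⁻¹] p⁻¹) (𝓝 p⁻¹) := by
      have h1 : Tendsto (fun a : ℝ => a⁻¹) (𝓝[Ioo (0:ℝ) p⁻¹] p⁻¹) (𝓝 p) := by
        have hcinv : Tendsto (fun a : ℝ => a⁻¹) (𝓝 p⁻¹) (𝓝 (p⁻¹)⁻¹) :=
          (continuousAt_inv₀ (inv_ne_zero hp0.ne')).tendsto
        rw [inv_inv] at hcinv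
        exact hcinv.mono_left nhdsWithin_le_nhds
      have h2 : Tendsto (fun a : ℝ => (a⁻¹ - p) * (p⁻¹ * p⁻¹) * Cm)
          (𝓝[Ioo (0:ℝ) p⁻¹] p⁻¹) (𝓝 0) := by
        have := ((h1.sub_const p).mul_const (p⁻¹ * p⁻¹)).mul_const Cm
        simpa using this
      have h3' := Tendsto.sub
        (tendsto_const_nhds : Tendsto (fun _ : ℝ => p⁻¹) (𝓝[Ioo (0:ℝ) p⁻¹] p⁻¹) (𝓝 p⁻¹)) h2
      simpa using h3'
    exact tendsto_of_tendsto_of_tendsto_of_le_of_le' hlowt tendsto_const_nhds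
      (hmem.mono fun a ha => (hkey a ha).1) (hmem.mono fun a ha => (hkey a ha).2)
  -- continuity on the interval
  have hcont : ContinuousOn (Gber p c σ) (Ioo (0:ℝ) p⁻¹) := by
    have key : ContinuousOn (fun a => ∫ y, f a y) (Ioo (0:ℝ) p⁻¹) := by
      apply continuousOn_of_dominated (bound := fun y => p⁻¹ * pdens σ y)
      · exact fun a ha => (hf_cont a ha).aestronglyMeasurable
      · intro a ha
        refine Eventually.of_forall fun y => ?_
        rw [Real.norm_eq_abs, abs_of_nonneg (hf_nonneg a ha y)]
        exact hf_le a ha y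
      · exact hpd_int.const_mul _
      · refine Eventually.of_forall fun y => ?_
        apply ContinuousOn.mul _ continuousOn_const
        apply ContinuousOn.div continuousOn_const
        · exact continuousOn_const.add (continuousOn_inv₀.mono
            (fun x hx => by simp [ne_of_gt hx.1]))
        · exact fun a ha => (hD a ha y).2.2.ne'
    exact key
  -- unique solution
  refine ⟨hmono, h0, hP, ?_⟩
  haveI h0ne : (𝓝[Ioo (0:ℝ) p⁻¹] 0).NeBot := left_nhdsWithin_Ioo_neBot hIpos
  haveI hPne : (𝓝[Ioo (0:ℝ) p⁻¹] p⁻¹).NeBot := right_nhdsWithin_Ioo_neBot hIpos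
  obtain ⟨a₁, ha₁I, ha₁lt⟩ :=
    (eventually_mem_nhdsWithin.and (h0.eventually (eventually_lt_nhds one_pos))).exists
  obtain ⟨a₂, ha₂I, ha₂gt⟩ :=
    (eventually_mem_nhdsWithin.and (hP.eventually (eventually_gt_nhds hpinv1))).exists
  have h12 : a₁ ≤ a₂ := by
    by_contra h
    push_neg at h
    have := hmono ha₂I ha₁I h
    linarith
  have hsub2 : Icc a₁ a₂ ⊆ Ioo (0:ℝ) p⁻¹ :=
    fun x hx => ⟨lt_of_lt_of_le ha₁I.1 hx.1, lt_of_le_of_lt hx.2 ha₂I.2⟩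
  obtain ⟨a₀, ha₀, hGa₀⟩ := intermediate_value_Icc h12 (hcont.mono hsub2)
    (⟨ha₁lt.le, ha₂gt.le⟩ : (1:ℝ) ∈ Icc (Gber p c σ a₁) (Gber p c σ a₂))
  refine ⟨a₀, ⟨hsub2 ha₀, hGa₀⟩, ?_⟩
  rintro b ⟨hbI, hGb⟩
  exact hmono.injOn hbI (hsub2 ha₀) (by rw [hGb, hGa₀])

end
end
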